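/- Let σ be a diagonal braiding on V = span{x_1,...,x_n} given by σ(x_i ⊗ x_j) = q_{ij} x_j ⊗ x_i, and define ad_σ x_i(ρ) = x_i ρ − (g_i·ρ) x_i in the Nichols algebra B(V), where g_i acts on a ℤⁿ-homogeneous element ρ of degree (d_1,...,d_n) by the scalar ∏_j q_{ij}^{d_j}. Then the right skew-differential operator ∂_i^R satisfies ∂_i^R((ad_σ x_i)^m(x_j)) = q_{ji}^{−1} [m]_{q_{ii}^{−1}} (1 − q_{ii}^{m−1} q_{ij} q_{ji}) (ad_σ x_i)^{m−1}(x_j) for all m ∈ ℕ and j ≠ i. -/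

import Mathlib

/-- In a braided vector space of diagonal type with constants `q i j`, the right
skew-differential operator satisfies
`∂ᵢᴿ((ad_σ xᵢ)^m (x_j)) = q_{ji}⁻¹ [m]_{q_{ii}⁻¹} (1 - q_{ii}^{m-1} q_{ij} q_{ji})
  (ad_σ xᵢ)^{m-1}(x_j)` for `m ≥ 1` and `j ≠ i`.
Here `B` is an algebra carrying the actions `g i` of the group-likes `gᵢ` and
`E i` of `eᵢ⁻¹` (algebra endomorphisms acting on the generators by the indicated
scalars) and the right skew-differential operators `D i` characterized by their
values on generators and the twisted Leibniz rule. -/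
theorem stmt15 {k : Type*} [Field k] [CharZero k] {n : ℕ}
    {B : Type*} [Ring B] [Algebra k B]
    (q : Fin n → Fin n → k) (hq : ∀ i j, q i j ≠ 0)
    (x : Fin n → B)
    (g E : Fin n → (B →ₐ[k] B))
    (hg : ∀ i j, g i (x j) = q i j • x j)
    (hE : ∀ i j, E i (x j) = (q j i)⁻¹ • x j)
    (D : Fin n → (B →ₗ[k] B))
    (hD1 : ∀ i, D i 1 = 0)
    (hDx : ∀ i j, D i (x j) = if i = j then 1 else 0)
    (hLeib : ∀ i (ρ₁ ρ₂ : B), D i (ρ₁ * ρ₂) = ρ₁ * D i ρ₂ + D i ρ₁ * E i ρ₂)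
    (i j : Fin n) (hij : j ≠ i) (m : ℕ) (hm : 1 ≤ m) :
    D i ((fun ρ => x i * ρ - g i ρ * x i)^[m] (x j)) =
      ((q j i)⁻¹ * (∑ l ∈ Finset.range m, ((q i i)⁻¹) ^ l) *
        (1 - q i i ^ (m - 1) * q i j * q j i)) •
      ((fun ρ => x i * ρ - g i ρ * x i)^[m - 1] (x j)) := by
  set f : B → B := fun ρ => x i * ρ - g i ρ * x i with hf
  have hQ : q i i ≠ 0 := hq i i
  have hji : q j i ≠ 0 := hq j i
  -- action of g i on iterates
  have hgm : ∀ m : ℕ, g i (f^[m] (x j)) = (q i i ^ m * q i j) • f^[m] (x j) := by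
    intro m
    induction m with
    | zero => simpa using hg i j
    | succ m ih =>
      rw [Function.iterate_succ_apply']
      show g i (x i * f^[m] (x j) - g i (f^[m] (x j)) * x i)
        = (q i i ^ (m + 1) * q i j) • (x i * f^[m] (x j) - g i (f^[m] (x j)) * x i)
      simp only [map_sub, map_mul, map_smul, smul_mul_assoc, mul_smul_comm, smul_smul,
        ih, hg i i]
      match_scalars <;> ring
  have hstep : ∀ m : ℕ, f^[m+1] (x j)
      = x i * f^[m] (x j) - (q i i ^ m * q i j) • (f^[m] (x j) * x i) := by
    intro m
    rw [Function.iterate_succ_apply']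
    show x i * f^[m] (x j) - g i (f^[m] (x j)) * x i = _
    rw [hgm m, smul_mul_assoc]
  have hEm : ∀ m : ℕ, E i (f^[m] (x j)) = ((q i i)⁻¹ ^ m * (q j i)⁻¹) • f^[m] (x j) := by
    intro m
    induction m with
    | zero => simpa using hE i j
    | succ m ih =>
      rw [hstep m]
      simp only [map_sub, map_mul, map_smul, smul_mul_assoc, mul_smul_comm, smul_smul,
        ih, hE i i]
      match_scalars <;> ring
  -- geometric sum identity
  have hS : ∀ m : ℕ, (q i i - 1) * (∑ l ∈ Finset.range m, ((q i i)⁻¹) ^ l)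
      = q i i - q i i * ((q i i)⁻¹) ^ m := by
    intro m
    induction m with
    | zero => simp
    | succ m ih =>
      rw [Finset.sum_range_succ, mul_add, ih, pow_succ]
      field_simp
      ring
  obtain ⟨m, rfl⟩ : ∃ m', m = m' + 1 := ⟨m - 1, by omega⟩
  simp only [Nat.add_sub_cancel]
  clear hm
  induction m with
  | zero =>
    rw [hstep 0]
    simp only [Function.iterate_zero_apply, pow_zero, one_mul]
    rw [map_sub, map_smul, hLeib, hLeib, hDx, hDx, hE i j, hE i i,
      if_pos rfl, if_neg (Ne.symm hij)]
    simp only [mul_zero, zero_mul, zero_add, one_mul, mul_one, add_zero, smul_zero,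
      sub_zero, Finset.range_one, Finset.sum_singleton, pow_zero]
    match_scalars
    field_simp
  | succ m ih =>
    rw [hstep (m+1), map_sub, map_smul, hLeib, hLeib, hDx, if_pos rfl,
      hEm (m+1), hE i i, ih, hstep m]
    rw [Finset.sum_range_succ (f := fun l => ((q i i)⁻¹) ^ l) (n := m + 1)]
    have hS1 := hS (m + 1)
    have hu : q i i * (q i i)⁻¹ = 1 := mul_inv_cancel₀ hQ
    have hv : q j i * (q j i)⁻¹ = 1 := mul_inv_cancel₀ hji
    set S := ∑ l ∈ Finset.range (m + 1), ((q i i)⁻¹) ^ l with hSdef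
    simp only [mul_one, one_mul, smul_mul_assoc, mul_smul_comm, smul_smul, smul_sub,
      smul_add]
    match_scalars
    · linear_combination (q i i ^ m * q i j) * hS1 +
        (S * q i i ^ m * q i j * (q i i - 1) +
          ((q i i)⁻¹) ^ (m + 1) * q i i ^ (m + 1) * q i j) * hv
    · linear_combination (-(q i i ^ m * q i j) ^ 2) * hS1 +
        (-(q i i ^ m * q i j) * (q j i)⁻¹ * S +
          (q i i ^ m * q i j) ^ 2 * S * q j i * (q j i)⁻¹) * hu +
        ((q i i ^ m * q i j) ^ 2 * S * (1 - q i i) -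
          q i i ^ (m + 1) * q i i ^ m * q i j ^ 2 * ((q i i)⁻¹) ^ (m + 1)) * hv
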